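/- Let K be an algebraically closed field and A an integral domain which is a finitely generated commutative K-algebra graded by ℤ^n. Then for χ ∈ ℤ^n, there exists a K-algebra homomorphism x : A → K with χ ∈ ω(x) (i.e., the set of χ-semistable points is nonempty) if and only if χ lies in the weight cone ω(A). -/

import Mathlib

/-- The convex cone in `ℚ^n` generated over `ℚ_{≥0}` by a set `S`:
all finite nonnegative rational combinations of elements of `S`. -/
def coneGen {n : ℕ} (S : Set (Fin n → ℚ)) : Set (Fin n → ℚ) :=
  {v | ∃ (s : Finset (Fin n → ℚ)) (c : (Fin n → ℚ) → ℚ),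
    (∀ w ∈ s, 0 ≤ c w ∧ w ∈ S) ∧ v = ∑ w ∈ s, c w • w}

/-- The orbit cone `ω(x)` of a `K`-algebra homomorphism `x : A → K`: the convex
cone generated over `ℚ_{≥0}` by all `m ∈ ℤ^n` admitting `a ∈ 𝒜 m` with `x a ≠ 0`. -/
def orbitCone {K A : Type*} [Field K] [CommRing A] [Algebra K A]
    {n : ℕ} (𝒜 : (Fin n → ℤ) → Submodule K A) (x : A →ₐ[K] K) : Set (Fin n → ℚ) :=
  coneGen {v | ∃ (m : Fin n → ℤ) (a : A), a ∈ 𝒜 m ∧ x a ≠ 0 ∧ v = fun j => (m j : ℚ)}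

/-- The weight cone `ω(A)`: the convex cone generated over `ℚ_{≥0}` by all
`m ∈ ℤ^n` with `𝒜 m ≠ 0`. -/
def weightCone {K A : Type*} [Field K] [CommRing A] [Algebra K A]
    {n : ℕ} (𝒜 : (Fin n → ℤ) → Submodule K A) : Set (Fin n → ℚ) :=
  coneGen {v | ∃ m : Fin n → ℤ, 𝒜 m ≠ ⊥ ∧ v = fun j => (m j : ℚ)}


lemma exists_algHom_ne_zero {K A : Type*} [Field K] [IsAlgClosed K] [CommRing A] [IsDomain A]
    [Algebra K A] [Algebra.FiniteType K A] (a : A) (ha : a ≠ 0) :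
    ∃ x : A →ₐ[K] K, x a ≠ 0 := by
  haveI : IsJacobsonRing A := isJacobsonRing_of_finiteType (A := K)
  have hjac : (⊥ : Ideal A).jacobson = ⊥ := by
    rw [← Ideal.radical_eq_jacobson]
    exact Ideal.radical_bot_of_noZeroDivisors
  have hnot : a ∉ (⊥ : Ideal A).jacobson := by rw [hjac]; simpa using ha
  rw [Ideal.jacobson, Ideal.mem_sInf] at hnot
  push_neg at hnot
  obtain ⟨m, ⟨-, hmax⟩, ham⟩ := hnot
  haveI := hmax
  haveI : Algebra.FiniteType K (A ⧸ m) :=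
    Algebra.FiniteType.of_surjective (Ideal.Quotient.mkₐ K m) (Ideal.Quotient.mkₐ_surjective K m)
  haveI : Module.Finite K (A ⧸ m) :=
    @finite_of_finite_type_of_isJacobsonRing K (A ⧸ m) _ (Ideal.Quotient.field m) _ _ _
  haveI : Algebra.IsIntegral K (A ⧸ m) := Algebra.IsIntegral.of_finite K _
  have hsurj : Function.Surjective (algebraMap K (A ⧸ m)) :=
    IsAlgClosed.algebraMap_bijective_of_isIntegral.2
  haveI : Nontrivial (A ⧸ m) := Ideal.Quotient.nontrivial_iff.mpr hmax.ne_top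
  have hinj : Function.Injective (algebraMap K (A ⧸ m)) := (algebraMap K (A ⧸ m)).injective
  let e : K ≃+* (A ⧸ m) := RingEquiv.ofBijective (algebraMap K (A ⧸ m)) ⟨hinj, hsurj⟩
  refine ⟨{ toRingHom := e.symm.toRingHom.comp (Ideal.Quotient.mk m),
            commutes' := fun c => ?_ }, ?_⟩
  · show e.symm (Ideal.Quotient.mk m (algebraMap K A c)) = c
    have h1 : Ideal.Quotient.mk m (algebraMap K A c) = e c := rfl
    rw [h1, RingEquiv.symm_apply_apply]
  · show e.symm (Ideal.Quotient.mk m a) ≠ 0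
    intro h
    apply ham
    have h2 : Ideal.Quotient.mk m a = 0 := by
      have := congrArg e h
      rwa [RingEquiv.apply_symm_apply, map_zero] at this
    rwa [Ideal.Quotient.eq_zero_iff_mem] at h2

/-- Let `K` be algebraically closed and `A` an integral domain which is a finitely
generated commutative `K`-algebra graded by `ℤ^n`. Then for `χ ∈ ℤ^n`, there exists
a `K`-algebra homomorphism `x : A → K` with `χ ∈ ω(x)` if and only if `χ` lies in
the weight cone `ω(A)`. -/
theorem exists_semistable_iff_mem_weightCone
    {K A : Type*} [Field K] [IsAlgClosed K] [CommRing A] [IsDomain A] [Algebra K A]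
    {n : ℕ} (hn : 1 ≤ n) (𝒜 : (Fin n → ℤ) → Submodule K A) [GradedAlgebra 𝒜]
    [Algebra.FiniteType K A] (χ : Fin n → ℤ) :
    (∃ x : A →ₐ[K] K, (fun j => (χ j : ℚ)) ∈ orbitCone 𝒜 x) ↔
      (fun j => (χ j : ℚ)) ∈ weightCone 𝒜 := by
  constructor
  · rintro ⟨x, s, c, h, hsum⟩
    refine ⟨s, c, fun w hw => ⟨(h w hw).1, ?_⟩, hsum⟩
    obtain ⟨m, a, haM, hxa, he⟩ := (h w hw).2
    refine ⟨m, ?_, he⟩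
    intro hbot
    exact hxa (by rw [hbot] at haM; simp only [Submodule.mem_bot] at haM; simp [haM])
  · rintro ⟨s, c, h, hsum⟩
    choose m hm hw using fun w : {w // w ∈ s} => (h w w.2).2
    choose a haM hane using fun w : {w // w ∈ s} =>
      (Submodule.ne_bot_iff _).mp (hm w)
    have hP : (∏ w ∈ s.attach, a w) ≠ 0 :=
      Finset.prod_ne_zero_iff.mpr fun w _ => hane w
    obtain ⟨x, hx⟩ := exists_algHom_ne_zero (K := K) (∏ w ∈ s.attach, a w) hP
    rw [map_prod] at hx
    have hxw : ∀ w : {w // w ∈ s}, x (a w) ≠ 0 := fun w h0 =>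
      hx (Finset.prod_eq_zero (Finset.mem_attach s w) h0)
    exact ⟨x, s, c, fun w hw' =>
      ⟨(h w hw').1, m ⟨w, hw'⟩, a ⟨w, hw'⟩, haM ⟨w, hw'⟩, hxw ⟨w, hw'⟩, hw ⟨w, hw'⟩⟩, hsum⟩
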